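/- arXiv:1410.8116 — 6 statements merged into one kernel-verified Lean document; each statement's English description precedes it below -/
import Mathlib

section
/- Let S be a finite set of real numbers with at least two elements, let m = min S and M = max S, and let d be a real number with d ∉ S and m < d < M. Set T = (S ∪ {d}) \ {m, M}, S₁ = (S ∪ {d}) \ {m}, S₂ = S \ {M}, S₃ = (S ∪ {d}) \ {M}, S₄ = S \ {m}. Then Δ(S)·★(S)·Δ(T)·★(T) = Δ(S₁)·★(S₁)·Δ(S₂)·★(S₂) + Δ(S₃)·★(S₃)·Δ(S₄)·★(S₄). -/
/-- `Δ(A) = ∏_{x,y ∈ A, x < y} (y - x)`. -/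
noncomputable def delta (A : Finset ℝ) : ℝ :=
  ∏ x ∈ A, ∏ y ∈ A.filter (fun y => x < y), (y - x)

/-- `★(A) = ∏_{x,y ∈ A, x < y} (x + y - 1)`. -/
noncomputable def starOp (A : Finset ℝ) : ℝ :=
  ∏ x ∈ A, ∏ y ∈ A.filter (fun y => x < y), (x + y - 1)

/-- `φ(t) = t² - t`, so that `(y-x)(x+y-1) = φ(y) - φ(x)`. -/
noncomputable def phiQ (t : ℝ) : ℝ := t * t - t

/-- `FF A = Δ(A) ⋆(A)`, rewritten as a Vandermonde-type product in `φ`. -/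
noncomputable def FF (A : Finset ℝ) : ℝ :=
  ∏ x ∈ A, ∏ y ∈ A.filter (fun y => x < y), (phiQ y - phiQ x)

lemma FF_eq (A : Finset ℝ) : delta A * starOp A = FF A := by
  unfold delta starOp FF
  rw [← Finset.prod_mul_distrib]
  refine Finset.prod_congr rfl fun x _ => ?_
  rw [← Finset.prod_mul_distrib]
  refine Finset.prod_congr rfl fun y _ => ?_
  unfold phiQ; ring

lemma FF_insert (a : ℝ) (A : Finset ℝ) (ha : a ∉ A) :
    FF (insert a A) =
      FF A * (∏ y ∈ A.filter (fun y => a < y), (phiQ y - phiQ a)) *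
        (∏ x ∈ A.filter (fun x => x < a), (phiQ a - phiQ x)) := by
  unfold FF
  rw [Finset.prod_insert ha]
  have h1 : (insert a A).filter (fun y => a < y) = A.filter (fun y => a < y) := by
    rw [Finset.filter_insert, if_neg (lt_irrefl a)]
  rw [h1]
  have h2 : ∀ x ∈ A, ∏ y ∈ (insert a A).filter (fun y => x < y), (phiQ y - phiQ x)
      = (if x < a then (phiQ a - phiQ x) else 1) *
          ∏ y ∈ A.filter (fun y => x < y), (phiQ y - phiQ x) := by
    intro x _
    rw [Finset.filter_insert]
    by_cases hxa : x < a
    · rw [if_pos hxa, if_pos hxa,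
        Finset.prod_insert (by simp [Finset.mem_filter, ha])]
    · rw [if_neg hxa, if_neg hxa, one_mul]
  rw [Finset.prod_congr rfl h2, Finset.prod_mul_distrib, ← Finset.prod_filter]
  ring

theorem kuo_condensation_identity (S : Finset ℝ) (m M d : ℝ)
    (hcard : 2 ≤ S.card)
    (hmS : m ∈ S) (hm : ∀ x ∈ S, m ≤ x)
    (hMS : M ∈ S) (hM : ∀ x ∈ S, x ≤ M)
    (hdS : d ∉ S) (hmd : m < d) (hdM : d < M) :
    delta S * starOp S * delta (((insert d S).erase m).erase M) *
        starOp (((insert d S).erase m).erase M) =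
      delta ((insert d S).erase m) * starOp ((insert d S).erase m) *
          delta (S.erase M) * starOp (S.erase M) +
        delta ((insert d S).erase M) * starOp ((insert d S).erase M) *
          delta (S.erase m) * starOp (S.erase m) := by
  classical
  have hmM : m < M := hmd.trans hdM
  have hdm : d ≠ m := ne_of_gt hmd
  have hdMne : d ≠ M := ne_of_lt hdM
  have hMm : M ≠ m := ne_of_gt hmM
  set W : Finset ℝ := (S.erase m).erase M with hWdef
  have hMW : M ∉ W := Finset.notMem_erase _ _
  have hmW : m ∉ W := by simp [hWdef, Finset.mem_erase]
  have hWS : ∀ w ∈ W, w ∈ S := fun w hw =>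
    Finset.mem_of_mem_erase (Finset.mem_of_mem_erase hw)
  have hdW : d ∉ W := fun h => hdS (hWS d h)
  have hWlt : ∀ w ∈ W, m < w ∧ w < M := by
    intro w hw
    have hwm : w ≠ m := (Finset.mem_erase.mp (Finset.mem_of_mem_erase hw)).1
    have hwM : w ≠ M := (Finset.mem_erase.mp hw).1
    exact ⟨lt_of_le_of_ne (hm w (hWS w hw)) (Ne.symm hwm),
      lt_of_le_of_ne (hM w (hWS w hw)) hwM⟩
  -- set identities
  have hMem : M ∈ S.erase m := Finset.mem_erase.mpr ⟨hMm, hMS⟩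
  have hSm : S.erase m = insert M W := (Finset.insert_erase hMem).symm
  have hS : S = insert m (insert M W) := by
    rw [← hSm, Finset.insert_erase hmS]
  have hmemM : m ∈ S.erase M := Finset.mem_erase.mpr ⟨hMm.symm, hmS⟩
  have hSM : S.erase M = insert m W := by
    rw [hWdef, Finset.erase_right_comm, Finset.insert_erase hmemM]
  have eT : ((insert d S).erase m).erase M = insert d W := by
    rw [Finset.erase_insert_of_ne hdm, Finset.erase_insert_of_ne hdMne]
  have eS1 : (insert d S).erase m = insert d (insert M W) := by
    rw [Finset.erase_insert_of_ne hdm, hSm]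
  have eS3 : (insert d S).erase M = insert d (insert m W) := by
    rw [Finset.erase_insert_of_ne hdMne, hSM]
  -- reduce to FF
  have hFF : ∀ A B : Finset ℝ,
      delta A * starOp A * delta B * starOp B = FF A * FF B := by
    intro A B; rw [← FF_eq, ← FF_eq]; ring
  rw [hFF, hFF, hFF, eT, eS1, eS3, hSM, hSm, hS]
  -- abbreviations
  set Pm : ℝ := ∏ y ∈ W, (phiQ y - phiQ m) with hPm
  set PM : ℝ := ∏ x ∈ W, (phiQ M - phiQ x) with hPM
  set Q1 : ℝ := ∏ y ∈ W.filter (fun y => d < y), (phiQ y - phiQ d) with hQ1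
  set Q2 : ℝ := ∏ x ∈ W.filter (fun x => x < d), (phiQ d - phiQ x) with hQ2
  -- filters of W under m and M
  have fW_m_lt : W.filter (fun y => m < y) = W :=
    Finset.filter_true_of_mem fun w hw => (hWlt w hw).1
  have fW_lt_m : W.filter (fun x => x < m) = ∅ :=
    Finset.filter_false_of_mem fun w hw => not_lt.mpr (le_of_lt (hWlt w hw).1)
  have fW_M_lt : W.filter (fun y => M < y) = ∅ :=
    Finset.filter_false_of_mem fun w hw => not_lt.mpr (le_of_lt (hWlt w hw).2)
  have fW_lt_M : W.filter (fun x => x < M) = W :=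
    Finset.filter_true_of_mem fun w hw => (hWlt w hw).2
  -- F of insert M W
  have hMinsW : M ∉ insert d W := by simp [hdMne.symm, hMW]
  have hminsW : m ∉ insert M W := by simp [hMm.symm, hmW]
  have hminsdW : m ∉ insert d W := by simp [hdm.symm, hmW]
  have hdinsMW : d ∉ insert M W := by simp [hdMne, hdW]
  have eFMW : FF (insert M W) = FF W * PM := by
    rw [FF_insert M W hMW, fW_M_lt, fW_lt_M]
    simp [hPM]
  -- F S = F (insert m (insert M W))
  have eFS : FF (insert m (insert M W)) = FF W * PM * ((phiQ M - phiQ m) * Pm) := by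
    rw [FF_insert m (insert M W) hminsW]
    have f1 : (insert M W).filter (fun y => m < y) = insert M W :=
      Finset.filter_true_of_mem (by
        intro w hw
        rcases Finset.mem_insert.mp hw with h | h
        · exact h ▸ hmM
        · exact (hWlt w h).1)
    have f2 : (insert M W).filter (fun x => x < m) = ∅ :=
      Finset.filter_false_of_mem (by
        intro w hw
        rcases Finset.mem_insert.mp hw with h | h
        · exact h ▸ not_lt.mpr (le_of_lt hmM)
        · exact not_lt.mpr (le_of_lt (hWlt w h).1))
    rw [f1, f2, eFMW, Finset.prod_insert hMW]
    simp [hPm]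
  -- F T = F (insert d W)
  have eFT : FF (insert d W) = FF W * Q1 * Q2 := by
    rw [FF_insert d W hdW]
  -- F S₁ = F (insert d (insert M W))
  have eFS1 : FF (insert d (insert M W)) = FF W * PM * ((phiQ M - phiQ d) * Q1) * Q2 := by
    rw [FF_insert d (insert M W) hdinsMW]
    have f1 : (insert M W).filter (fun y => d < y) =
        insert M (W.filter (fun y => d < y)) := by
      rw [Finset.filter_insert, if_pos hdM]
    have f2 : (insert M W).filter (fun x => x < d) = W.filter (fun x => x < d) := by
      rw [Finset.filter_insert, if_neg (not_lt.mpr (le_of_lt hdM))]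
    rw [f1, f2, eFMW, Finset.prod_insert (by simp [Finset.mem_filter, hMW])]
    try ring
  -- F S₂ = F (insert m W)
  have eFS2 : FF (insert m W) = FF W * Pm := by
    rw [FF_insert m W hmW, fW_m_lt, fW_lt_m]
    simp [hPm]
  -- F S₃ = F (insert m (insert d W))
  have eFS3 : FF (insert m (insert d W)) = FF W * Q1 * Q2 * ((phiQ d - phiQ m) * Pm) := by
    rw [FF_insert m (insert d W) hminsdW]
    have f1 : (insert d W).filter (fun y => m < y) = insert d W :=
      Finset.filter_true_of_mem (by
        intro w hw
        rcases Finset.mem_insert.mp hw with h | h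
        · exact h ▸ hmd
        · exact (hWlt w h).1)
    have f2 : (insert d W).filter (fun x => x < m) = ∅ :=
      Finset.filter_false_of_mem (by
        intro w hw
        rcases Finset.mem_insert.mp hw with h | h
        · exact h ▸ not_lt.mpr (le_of_lt hmd)
        · exact not_lt.mpr (le_of_lt (hWlt w h).1))
    rw [f1, f2, eFT, Finset.prod_insert hdW]
    try simp [hPm]
    try ring
  rw [eFS, eFT, eFS1, eFS2, Finset.insert_comm, eFS3, eFMW]
  ring
end

section
/- Let S be a finite set of real numbers, each element at least 1, with at least two elements; let m = min S and M = max S, and let d be a real number with d ∉ S and m < d < M. Set T = (S ∪ {d}) \ {m, M}, S₁ = (S ∪ {d}) \ {m}, S₂ = S \ {M}, S₃ = (S ∪ {d}) \ {M}, S₄ = S \ {m}. Then 1 = [Δ(S₁)·Δ(S₂)/(Δ(S)·Δ(T))]·[★(S₁)·★(S₂)/(★(S)·★(T))] + [Δ(S₃)·Δ(S₄)/(Δ(S)·Δ(T))]·[★(S₃)·★(S₄)/(★(S)·★(T))], all denominators being nonzero. -/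
noncomputable def pp (f : ℝ → ℝ → ℝ) (A : Finset ℝ) : ℝ :=
  ∏ x ∈ A, ∏ y ∈ A.filter (fun y => x < y), f x y

noncomputable def qq (f : ℝ → ℝ → ℝ) (R : Finset ℝ) (w : ℝ) : ℝ :=
  (∏ y ∈ R.filter (fun y => w < y), f w y) * (∏ x ∈ R.filter (fun x => x < w), f x w)

theorem pp_insert (f : ℝ → ℝ → ℝ) (A : Finset ℝ) (a : ℝ) (ha : a ∉ A) :
    pp f (insert a A) = qq f A a * pp f A := by
  unfold pp qq
  rw [Finset.prod_insert ha]
  have h1 : (insert a A).filter (fun y => a < y) = A.filter (fun y => a < y) := by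
    rw [Finset.filter_insert, if_neg (lt_irrefl a)]
  rw [h1]
  have h2 : ∀ x ∈ A, (∏ y ∈ (insert a A).filter (fun y => x < y), f x y)
      = (if x < a then f x a else 1) * ∏ y ∈ A.filter (fun y => x < y), f x y := by
    intro x hx
    rw [Finset.filter_insert]
    by_cases hxa : x < a
    · rw [if_pos hxa, if_pos hxa,
        Finset.prod_insert (fun hmem => ha (Finset.mem_filter.mp hmem).1)]
    · rw [if_neg hxa, if_neg hxa, one_mul]
  rw [Finset.prod_congr rfl h2, Finset.prod_mul_distrib, ← Finset.prod_filter]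
  ring

theorem pp_insert2 (f : ℝ → ℝ → ℝ) (R : Finset ℝ) (u v : ℝ) (huv : u < v)
    (hu : u ∉ R) (hv : v ∉ R) :
    pp f (insert u (insert v R)) = f u v * qq f R u * (qq f R v * pp f R) := by
  have hu' : u ∉ insert v R := by simp [hu, huv.ne]
  rw [pp_insert f _ u hu', pp_insert f R v hv]
  have hq : qq f (insert v R) u = f u v * qq f R u := by
    unfold qq
    rw [Finset.filter_insert, if_pos huv, Finset.filter_insert, if_neg (not_lt.mpr huv.le),
      Finset.prod_insert (fun hmem => hv (Finset.mem_filter.mp hmem).1)]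
    ring
  rw [hq]

theorem pp_pos (f : ℝ → ℝ → ℝ) (A : Finset ℝ)
    (h : ∀ x ∈ A, ∀ y ∈ A, x < y → 0 < f x y) : 0 < pp f A := by
  refine Finset.prod_pos fun x hx => Finset.prod_pos fun y hy => ?_
  have := Finset.mem_filter.mp hy
  exact h x hx y this.1 this.2

theorem delta_eq_pp (A : Finset ℝ) : delta A = pp (fun x y => y - x) A := rfl

theorem star_eq_pp (A : Finset ℝ) : starOp A = pp (fun x y => x + y - 1) A := rfl

theorem delta_pos (A : Finset ℝ) : 0 < delta A := by
  rw [delta_eq_pp]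
  exact pp_pos _ _ fun x _ y _ hxy => sub_pos.mpr hxy

theorem star_pos (A : Finset ℝ) (h : ∀ x ∈ A, 1 ≤ x) : 0 < starOp A := by
  rw [star_eq_pp]
  exact pp_pos _ _ fun x hx y hy _ => by have := h x hx; have := h y hy; linarith

/-- Equation (20) of the paper. -/
theorem kuo_condensation_eq20 (S : Finset ℝ) (m M d : ℝ)
    (hcard : 2 ≤ S.card) (hge1 : ∀ x ∈ S, 1 ≤ x)
    (hmS : m ∈ S) (hm : ∀ x ∈ S, m ≤ x)
    (hMS : M ∈ S) (hM : ∀ x ∈ S, x ≤ M)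
    (hdS : d ∉ S) (hmd : m < d) (hdM : d < M) :
    delta S * delta (((insert d S).erase m).erase M) ≠ 0 ∧
    starOp S * starOp (((insert d S).erase m).erase M) ≠ 0 ∧
    1 =
      delta ((insert d S).erase m) * delta (S.erase M) /
          (delta S * delta (((insert d S).erase m).erase M)) *
        (starOp ((insert d S).erase m) * starOp (S.erase M) /
          (starOp S * starOp (((insert d S).erase m).erase M))) +
      delta ((insert d S).erase M) * delta (S.erase m) /
          (delta S * delta (((insert d S).erase m).erase M)) *
        (starOp ((insert d S).erase M) * starOp (S.erase m) /
          (starOp S * starOp (((insert d S).erase m).erase M))) := by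
  set R : Finset ℝ := (S.erase m).erase M with hRdef
  have hmM : m < M := hmd.trans hdM
  have h1m : (1:ℝ) ≤ m := hge1 m hmS
  -- memberships
  have hMem : M ∈ S.erase m := Finset.mem_erase.mpr ⟨hmM.ne', hMS⟩
  have hmeM : m ∈ S.erase M := Finset.mem_erase.mpr ⟨hmM.ne, hmS⟩
  have hMR : M ∉ R := Finset.notMem_erase M _
  have hmR : m ∉ R := by
    rw [hRdef]; intro h
    exact (Finset.notMem_erase m S) (Finset.mem_of_mem_erase h)
  have hdR : d ∉ R := by
    rw [hRdef]; intro h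
    exact hdS (Finset.mem_of_mem_erase (Finset.mem_of_mem_erase h))
  -- set equalities
  have hSm : S.erase m = insert M R := (Finset.insert_erase hMem).symm
  have hSM : S.erase M = insert m R := by
    have : (S.erase M).erase m = R := by rw [hRdef, Finset.erase_right_comm]
    rw [← this, Finset.insert_erase hmeM]
  have hSeq : S = insert m (insert M R) := by
    rw [← hSm, Finset.insert_erase hmS]
  have hT : ((insert d S).erase m).erase M = insert d R := by
    rw [Finset.erase_insert_of_ne hmd.ne', Finset.erase_insert_of_ne hdM.ne]
  have hS1 : (insert d S).erase m = insert d (insert M R) := by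
    rw [Finset.erase_insert_of_ne hmd.ne', hSm]
  have hS3 : (insert d S).erase M = insert m (insert d R) := by
    rw [Finset.erase_insert_of_ne hdM.ne, hSM, Finset.insert_comm]
  -- nonzeroness
  have hTge1 : ∀ x ∈ ((insert d S).erase m).erase M, 1 ≤ x := by
    intro x hx
    have hx' := Finset.mem_of_mem_erase (Finset.mem_of_mem_erase hx)
    rcases Finset.mem_insert.mp hx' with h | h
    · subst h; linarith
    · exact hge1 x h
  have hX : delta S * delta (((insert d S).erase m).erase M) ≠ 0 :=
    (mul_pos (delta_pos S) (delta_pos _)).ne'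
  have hY : starOp S * starOp (((insert d S).erase m).erase M) ≠ 0 :=
    (mul_pos (star_pos S hge1) (star_pos _ hTge1)).ne'
  refine ⟨hX, hY, ?_⟩
  -- abbreviations
  set fδ : ℝ → ℝ → ℝ := fun x y => y - x with hfδ
  set fs : ℝ → ℝ → ℝ := fun x y => x + y - 1 with hfs
  have dS : delta S = (M - m) * qq fδ R m * (qq fδ R M * pp fδ R) := by
    rw [delta_eq_pp, hSeq]; exact pp_insert2 _ _ _ _ hmM hmR hMR
  have dT : delta (((insert d S).erase m).erase M) = qq fδ R d * pp fδ R := by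
    rw [delta_eq_pp, hT]; exact pp_insert _ _ _ hdR
  have dS1 : delta ((insert d S).erase m) = (M - d) * qq fδ R d * (qq fδ R M * pp fδ R) := by
    rw [delta_eq_pp, hS1]; exact pp_insert2 _ _ _ _ hdM hdR hMR
  have dS2 : delta (S.erase M) = qq fδ R m * pp fδ R := by
    rw [delta_eq_pp, hSM]; exact pp_insert _ _ _ hmR
  have dS3 : delta ((insert d S).erase M) = (d - m) * qq fδ R m * (qq fδ R d * pp fδ R) := by
    rw [delta_eq_pp, hS3]; exact pp_insert2 _ _ _ _ hmd hmR hdR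
  have dS4 : delta (S.erase m) = qq fδ R M * pp fδ R := by
    rw [delta_eq_pp, hSm]; exact pp_insert _ _ _ hMR
  have sS : starOp S = (m + M - 1) * qq fs R m * (qq fs R M * pp fs R) := by
    rw [star_eq_pp, hSeq]; exact pp_insert2 _ _ _ _ hmM hmR hMR
  have sT : starOp (((insert d S).erase m).erase M) = qq fs R d * pp fs R := by
    rw [star_eq_pp, hT]; exact pp_insert _ _ _ hdR
  have sS1 : starOp ((insert d S).erase m) = (d + M - 1) * qq fs R d * (qq fs R M * pp fs R) := by
    rw [star_eq_pp, hS1]; exact pp_insert2 _ _ _ _ hdM hdR hMR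
  have sS2 : starOp (S.erase M) = qq fs R m * pp fs R := by
    rw [star_eq_pp, hSM]; exact pp_insert _ _ _ hmR
  have sS3 : starOp ((insert d S).erase M) = (m + d - 1) * qq fs R m * (qq fs R d * pp fs R) := by
    rw [star_eq_pp, hS3]; exact pp_insert2 _ _ _ _ hmd hmR hdR
  have sS4 : starOp (S.erase m) = qq fs R M * pp fs R := by
    rw [star_eq_pp, hSm]; exact pp_insert _ _ _ hMR
  rw [div_mul_div_comm, div_mul_div_comm, ← add_div, eq_div_iff (mul_ne_zero hX hY)]
  rw [dS, dT, dS1, dS2, dS3, dS4, sS, sT, sS1, sS2, sS3, sS4]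
  ring
end

section
/- Let S be a finite set of real numbers with at least two elements, let m = min S and M = max S, and let d be a real number with d ∉ S and m < d < M. For a finite set A of reals write F(A) := (∏_{x∈A} x)·Δ(A)·⋆(A). Set T = (S ∪ {d}) \ {m, M}, S₁ = (S ∪ {d}) \ {m}, S₂ = S \ {M}, S₃ = (S ∪ {d}) \ {M}, S₄ = S \ {m}. Then F(S)·F(T) = F(S₁)·F(S₂) + F(S₃)·F(S₄). -/
/-- `⋆(A) = ∏_{x,y ∈ A, x < y} (x + y)`. -/
noncomputable def starOp' (A : Finset ℝ) : ℝ :=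
  ∏ x ∈ A, ∏ y ∈ A.filter (fun y => x < y), (x + y)

/-- `F(A) = (∏_{x ∈ A} x) · Δ(A) · ⋆(A)`. -/
noncomputable def F (A : Finset ℝ) : ℝ :=
  (∏ x ∈ A, x) * delta A * starOp' A

noncomputable def G (t : ℝ) (A : Finset ℝ) : ℝ :=
  (∏ y ∈ A.filter (fun y => t < y), (y - t)) *
  (∏ x ∈ A.filter (fun x => x < t), (t - x)) *
  (∏ y ∈ A.filter (fun y => t < y), (t + y)) *
  (∏ x ∈ A.filter (fun x => x < t), (x + t))

lemma prod_pairs_insert (g : ℝ → ℝ → ℝ) (t : ℝ) (A : Finset ℝ) (ht : t ∉ A) :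
    ∏ x ∈ insert t A, ∏ y ∈ (insert t A).filter (fun y => x < y), g x y
  = (∏ y ∈ A.filter (fun y => t < y), g t y) *
    ((∏ x ∈ A.filter (fun x => x < t), g x t) *
     ∏ x ∈ A, ∏ y ∈ A.filter (fun y => x < y), g x y) := by
  rw [Finset.prod_insert ht]
  congr 1
  · rw [Finset.filter_insert, if_neg (lt_irrefl t)]
  · have h1 : ∀ x ∈ A, (∏ y ∈ (insert t A).filter (fun y => x < y), g x y)
        = (if x < t then g x t else 1) * ∏ y ∈ A.filter (fun y => x < y), g x y := by
      intro x hx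
      rw [Finset.filter_insert]
      split_ifs with h
      · rw [Finset.prod_insert (by simp [ht])]
      · rw [one_mul]
    rw [Finset.prod_congr rfl h1, Finset.prod_mul_distrib, Finset.prod_filter]

lemma F_insert (t : ℝ) (A : Finset ℝ) (ht : t ∉ A) :
    F (insert t A) = t * G t A * F A := by
  rw [F, F, delta, starOp', delta, starOp', Finset.prod_insert ht,
    prod_pairs_insert (fun x y => y - x) t A ht,
    prod_pairs_insert (fun x y => x + y) t A ht, G]
  ring

lemma G_insert_gt {t u : ℝ} (A : Finset ℝ) (hu : u ∉ A) (h : t < u) :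
    G t (insert u A) = (u - t) * (t + u) * G t A := by
  rw [G, G, Finset.filter_insert, Finset.filter_insert, if_pos h,
    if_neg (not_lt.2 h.le), Finset.prod_insert (by simp [hu]),
    Finset.prod_insert (by simp [hu])]
  ring

lemma G_insert_lt {t u : ℝ} (A : Finset ℝ) (hu : u ∉ A) (h : u < t) :
    G t (insert u A) = (t - u) * (u + t) * G t A := by
  rw [G, G, Finset.filter_insert, Finset.filter_insert, if_pos h,
    if_neg (not_lt.2 h.le), Finset.prod_insert (by simp [hu]),
    Finset.prod_insert (by simp [hu])]
  ring

/-- The algebraic identity behind the induction step in the even case. -/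
theorem kuo_condensation_even (S : Finset ℝ) (m M d : ℝ)
    (hcard : 2 ≤ S.card)
    (hmS : m ∈ S) (hm : ∀ x ∈ S, m ≤ x)
    (hMS : M ∈ S) (hM : ∀ x ∈ S, x ≤ M)
    (hdS : d ∉ S) (hmd : m < d) (hdM : d < M) :
    F S * F (((insert d S).erase m).erase M) =
      F ((insert d S).erase m) * F (S.erase M) +
        F ((insert d S).erase M) * F (S.erase m) := by
  have hmM : m < M := hmd.trans hdM
  have hmd' : m ≠ d := ne_of_lt hmd
  have hdM' : d ≠ M := ne_of_lt hdM
  have hmM' : m ≠ M := ne_of_lt hmM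
  set R : Finset ℝ := (S.erase m).erase M with hR
  have hMR : M ∉ R := Finset.notMem_erase _ _
  have hmR : m ∉ R := fun h => Finset.notMem_erase m S (Finset.mem_of_mem_erase h)
  have hdR : d ∉ R := fun h => hdS (Finset.mem_of_mem_erase (Finset.mem_of_mem_erase h))
  have hMSm : M ∈ S.erase m := Finset.mem_erase.2 ⟨hmM'.symm, hMS⟩
  have hSm : S.erase m = insert M R := (Finset.insert_erase hMSm).symm
  have hmSM : m ∈ S.erase M := Finset.mem_erase.2 ⟨hmM', hmS⟩
  have hSM : S.erase M = insert m R := by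
    rw [hR, Finset.erase_right_comm]
    exact (Finset.insert_erase hmSM).symm
  have hS : S = insert m (insert M R) := by
    rw [← hSm, Finset.insert_erase hmS]
  have hT : ((insert d S).erase m).erase M = insert d R := by
    rw [Finset.erase_insert_of_ne hmd'.symm, Finset.erase_insert_of_ne hdM']
  have hS1 : (insert d S).erase m = insert d (insert M R) := by
    rw [Finset.erase_insert_of_ne hmd'.symm, hSm]
  have hS3 : (insert d S).erase M = insert d (insert m R) := by
    rw [Finset.erase_insert_of_ne hdM', hSM]
  have hmMR : m ∉ insert M R := by simp [hmM', hmR]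
  have hdMR : d ∉ insert M R := by simp [hdM', hdR]
  have hdmR : d ∉ insert m R := by simp [hmd'.symm, hdR]
  rw [hT, hS1, hS3, hSM, hSm, hS,
    F_insert m _ hmMR, F_insert M R hMR, F_insert d R hdR,
    F_insert d _ hdMR, F_insert m R hmR, F_insert d _ hdmR,
    G_insert_gt R hMR hmM, G_insert_gt R hMR hdM, G_insert_lt R hmR hmd, F_insert M R hMR, F_insert m R hmR]
  ring
end

section
/- Let S be a finite set of real numbers with at least two elements, let m = min S and M = max S, and let d be a real number with d ∉ S and d < M. Then (M − m)·Δ((S ∪ {d}) \ {m})·Δ(S \ {M}) = (M − d)·Δ(S)·Δ((S ∪ {d}) \ {m, M}). -/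
lemma delta_insert (a : ℝ) (A : Finset ℝ) (ha : a ∉ A) :
    delta (insert a A) = (∏ y ∈ A, |y - a|) * delta A := by
  unfold delta
  rw [Finset.prod_insert ha]
  have h1 : (insert a A).filter (fun y => a < y) = A.filter (fun y => a < y) := by
    rw [Finset.filter_insert]; simp
  have h2 : ∀ x ∈ A, ∏ y ∈ (insert a A).filter (fun y => x < y), (y - x)
      = (if x < a then (a - x) else 1) * ∏ y ∈ A.filter (fun y => x < y), (y - x) := by
    intro x hx
    rw [Finset.filter_insert]
    split_ifs with h
    · rw [Finset.prod_insert (by simp [ha])]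
    · simp
  rw [h1, Finset.prod_congr rfl h2, Finset.prod_mul_distrib]
  have h3 : (∏ x ∈ A, if x < a then a - x else 1)
      = ∏ x ∈ A.filter (fun x => x < a), (a - x) := by
    rw [Finset.prod_filter]
  have h4 : (∏ y ∈ A, |y - a|)
      = (∏ y ∈ A.filter (fun y => a < y), (y - a)) *
        ∏ y ∈ A.filter (fun y => y < a), (a - y) := by
    have hsplit : A.filter (fun y => ¬ a < y) = A.filter (fun y => y < a) := by
      apply Finset.filter_congr
      intro y hy
      have hne : y ≠ a := fun h => ha (h ▸ hy)
      simp only [not_lt, eq_iff_iff]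
      constructor
      · intro h; exact lt_of_le_of_ne h hne
      · intro h; exact le_of_lt h
    rw [← Finset.prod_filter_mul_prod_filter_not A (fun y => a < y), hsplit]
    congr 1
    · apply Finset.prod_congr rfl; intro y hy
      have := (Finset.mem_filter.mp hy).2
      rw [abs_of_pos]; linarith
    · apply Finset.prod_congr rfl; intro y hy
      have := (Finset.mem_filter.mp hy).2
      rw [abs_of_neg]; ring_nf; linarith
  rw [h3, h4]; ring

/-- Ratio simplification (21) of the paper, multiplied out. -/
theorem delta_ratio_21 (S : Finset ℝ) (m M d : ℝ)
    (hcard : 2 ≤ S.card)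
    (hmS : m ∈ S) (hm : ∀ x ∈ S, m ≤ x)
    (hMS : M ∈ S) (hM : ∀ x ∈ S, x ≤ M)
    (hdS : d ∉ S) (hdM : d < M) :
    (M - m) * delta ((insert d S).erase m) * delta (S.erase M) =
      (M - d) * delta S * delta (((insert d S).erase m).erase M) := by
  -- m < M
  have hmM : m < M := by
    obtain ⟨x, hxS, hxm⟩ := Finset.exists_mem_ne (s := S) (by omega) m
    have := hm x hxS
    have := hM x hxS
    rcases lt_or_eq_of_le (hm x hxS) with h | h
    · linarith
    · exact absurd h.symm hxm
  have hdm : d ≠ m := fun h => hdS (h ▸ hmS)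
  have hdMne : d ≠ M := fun h => hdS (h ▸ hMS)
  set T := (S.erase m).erase M with hT
  have hMT : M ∉ T := Finset.notMem_erase _ _
  have hmT : m ∉ T := fun h => Finset.notMem_erase m _ (Finset.mem_of_mem_erase h)
  have hdT : d ∉ T := fun h => hdS (Finset.mem_of_mem_erase (Finset.mem_of_mem_erase h))
  have hMem : M ∈ S.erase m := Finset.mem_erase.mpr ⟨ne_of_gt hmM, hMS⟩
  have hSm : S.erase m = insert M T := (Finset.insert_erase hMem).symm
  have hS : S = insert m (insert M T) := by
    rw [← hSm, Finset.insert_erase hmS]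
  have hSM : S.erase M = insert m T := by
    have hmem' : m ∈ S.erase M := Finset.mem_erase.mpr ⟨ne_of_lt hmM, hmS⟩
    rw [hT]
    ext x
    simp only [Finset.mem_erase, Finset.mem_insert]
    constructor
    · intro ⟨hx1, hx2⟩
      by_cases h : x = m
      · exact Or.inl h
      · exact Or.inr ⟨hx1, h, hx2⟩
    · rintro (rfl | ⟨h1, h2, h3⟩)
      · exact ⟨ne_of_lt hmM, hmS⟩
      · exact ⟨h1, h3⟩
  have hA1 : (insert d S).erase m = insert d (insert M T) := by
    rw [Finset.erase_insert_of_ne hdm, hSm]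
  have hA2 : ((insert d S).erase m).erase M = insert d T := by
    rw [hA1, Finset.erase_insert_of_ne hdMne, Finset.erase_insert hMT]
  have hmMT : m ∉ insert M T := by
    simp [hmT, ne_of_lt hmM]
  have hdMT : d ∉ insert M T := by
    simp [hdT, hdMne]
  rw [hA2, hA1, hSM, hS,
    delta_insert d (insert M T) hdMT, delta_insert M T hMT,
    delta_insert m (insert M T) hmMT,
    delta_insert m T hmT, delta_insert d T hdT, delta_insert M T hMT,
    Finset.prod_insert hMT, Finset.prod_insert hMT,
    abs_of_pos (by linarith : (0:ℝ) < M - d),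
    abs_of_pos (by linarith : (0:ℝ) < M - m)]
  ring
end

section
/- Let S be a finite set of real numbers with at least two elements, let m = min S and M = max S, and let d be a real number with d ∉ S. Then (M + m − 1)·★((S ∪ {d}) \ {m})·★(S \ {M}) = (M + d − 1)·★(S)·★((S ∪ {d}) \ {m, M}). -/
lemma star_insert (a : ℝ) (A : Finset ℝ) (ha : a ∉ A) :
    starOp (insert a A) = (∏ y ∈ A, (a + y - 1)) * starOp A := by
  unfold starOp
  rw [Finset.prod_insert ha]
  have h1 : (insert a A).filter (fun y => a < y) = A.filter (fun y => a < y) := by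
    rw [Finset.filter_insert]; simp [lt_irrefl]
  rw [h1]
  have h2 : ∀ x ∈ A, ∏ y ∈ (insert a A).filter (fun y => x < y), (x + y - 1)
      = (if x < a then (x + a - 1) else 1) * ∏ y ∈ A.filter (fun y => x < y), (x + y - 1) := by
    intro x hx
    rw [Finset.filter_insert]
    split_ifs with h
    · rw [Finset.prod_insert (by simp [Finset.mem_filter, ha])]
    · simp
  rw [Finset.prod_congr rfl h2, Finset.prod_mul_distrib]
  have h3 : (∏ x ∈ A, (if x < a then (x + a - 1) else 1))
      = ∏ x ∈ A.filter (fun x => x < a), (x + a - 1) := (Finset.prod_filter _ _).symm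
  have h4 : A.filter (fun x => x < a) = A.filter (fun x => ¬ a < x) := by
    apply Finset.filter_congr
    intro x hx
    have hxa : x ≠ a := fun h => ha (h ▸ hx)
    constructor
    · exact fun h => not_lt.mpr h.le
    · intro h; exact lt_of_le_of_ne (not_lt.mp h) hxa
  have h5 : (∏ x ∈ A.filter (fun x => ¬ a < x), (x + a - 1))
      = ∏ x ∈ A.filter (fun x => ¬ a < x), (a + x - 1) := by
    apply Finset.prod_congr rfl; intro x _; ring
  have h6 : (∏ y ∈ A.filter (fun y => a < y), (a + y - 1))
      * ∏ x ∈ A.filter (fun x => ¬ a < x), (a + x - 1) = ∏ y ∈ A, (a + y - 1) :=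
    Finset.prod_filter_mul_prod_filter_not A _ _
  rw [h3, h4, h5, ← mul_assoc, h6]

/-- Ratio simplification (22) of the paper, multiplied out. -/
theorem star_ratio_22 (S : Finset ℝ) (m M d : ℝ)
    (hcard : 2 ≤ S.card)
    (hmS : m ∈ S) (hm : ∀ x ∈ S, m ≤ x)
    (hMS : M ∈ S) (hM : ∀ x ∈ S, x ≤ M)
    (hdS : d ∉ S) :
    (M + m - 1) * starOp ((insert d S).erase m) * starOp (S.erase M) =
      (M + d - 1) * starOp S * starOp (((insert d S).erase m).erase M) := by
  have hmM : m < M := by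
    rcases Finset.one_lt_card.mp hcard with ⟨x, hx, y, hy, hxy⟩
    rcases lt_or_eq_of_le (hm M hMS) with h | h
    · exact h
    · exfalso
      apply hxy
      have hx1 : x = m := le_antisymm (h ▸ hM x hx) (hm x hx)
      have hy1 : y = m := le_antisymm (h ▸ hM y hy) (hm y hy)
      rw [hx1, hy1]
  set T := (S.erase m).erase M with hT
  have hMem : M ∈ S.erase m := Finset.mem_erase.mpr ⟨hmM.ne', hMS⟩
  have hMT : M ∉ T := Finset.notMem_erase _ _
  have hmT' : m ∉ S.erase m := Finset.notMem_erase _ _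
  have hSm : S.erase m = insert M T := (Finset.insert_erase hMem).symm
  have hmMT : m ∉ insert M T := hSm ▸ hmT'
  have hS : S = insert m (insert M T) := by rw [← hSm, Finset.insert_erase hmS]
  have hdm : d ≠ m := fun h => hdS (h ▸ hmS)
  have hdM : d ≠ M := fun h => hdS (h ▸ hMS)
  have hdMT : d ∉ insert M T := hSm ▸ fun h => hdS (Finset.mem_of_mem_erase h)
  have hdT : d ∉ T := fun h => hdMT (Finset.mem_insert_of_mem h)
  have e1 : (insert d S).erase m = insert d (insert M T) := by
    rw [Finset.erase_insert_of_ne hdm, hSm]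
  have e2 : ((insert d S).erase m).erase M = insert d T := by
    rw [e1, Finset.erase_insert_of_ne hdM, Finset.erase_insert hMT]
  have e3 : S.erase M = insert m T := by
    rw [hS, Finset.erase_insert_of_ne hmM.ne, Finset.erase_insert hMT]
  have hmTT : m ∉ T := fun h => hmMT (Finset.mem_insert_of_mem h)
  rw [e2, e1, e3, hS,
    star_insert d _ hdMT, star_insert m _ hmMT, star_insert M _ hMT,
    star_insert d _ hdT, star_insert m _ hmTT,
    Finset.prod_insert hMT, Finset.prod_insert hMT]
  ring
end

section
/- Let S be a finite set of real numbers with at least two elements, let m = min S and M = max S, and let d be a real number with d ∉ S. Then (M + m − 1)·★((S ∪ {d}) \ {M})·★(S \ {m}) = (d + m − 1)·★(S)·★((S ∪ {d}) \ {m, M}). -/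
/-- Ratio simplification (24) of the paper, multiplied out. -/
theorem star_ratio_24 (S : Finset ℝ) (m M d : ℝ)
    (hcard : 2 ≤ S.card)
    (hmS : m ∈ S) (hm : ∀ x ∈ S, m ≤ x)
    (hMS : M ∈ S) (hM : ∀ x ∈ S, x ≤ M)
    (hdS : d ∉ S) :
    (M + m - 1) * starOp ((insert d S).erase M) * starOp (S.erase m) =
      (d + m - 1) * starOp S * starOp (((insert d S).erase m).erase M) := by
  have hmM : m < M := by
    obtain ⟨x, hxS, hxm⟩ : ∃ x ∈ S, x ≠ m := by
      by_contra h
      push_neg at h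
      have : S ⊆ {m} := fun y hy => by simp [h y hy]
      have := Finset.card_le_card this
      simp at this; omega
    exact lt_of_lt_of_le (lt_of_le_of_ne (hm x hxS) (Ne.symm hxm)) (hM x hxS)
  have hdm : d ≠ m := fun h => hdS (h ▸ hmS)
  have hdM : d ≠ M := fun h => hdS (h ▸ hMS)
  set T := (S.erase m).erase M with hT
  have hmT : m ∉ T := by simp [hT]
  have hMT : M ∉ T := by simp [hT]
  have hdT : d ∉ T := fun h => hdS (Finset.mem_of_mem_erase (Finset.mem_of_mem_erase h))
  have hT' : T = (S.erase M).erase m := by rw [hT, Finset.erase_right_comm]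
  have hSm : S.erase m = insert M T :=
    (Finset.insert_erase (Finset.mem_erase.2 ⟨ne_of_gt hmM, hMS⟩)).symm
  have hSM : S.erase M = insert m T := by
    rw [hT']
    exact (Finset.insert_erase (Finset.mem_erase.2 ⟨ne_of_lt hmM, hmS⟩)).symm
  have hS : S = insert m (insert M T) := by
    rw [← hSm, Finset.insert_erase hmS]
  have e1 : (insert d S).erase M = insert d (insert m T) := by
    rw [Finset.erase_insert_of_ne hdM, hSM]
  have e2 : ((insert d S).erase m).erase M = insert d T := by
    rw [Finset.erase_insert_of_ne hdm, Finset.erase_insert_of_ne hdM, hT]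
  have hMmT : M ∉ insert m T := by simp [hMT, ne_of_gt hmM]
  have hmMT : m ∉ insert M T := by simp [hmT, ne_of_lt hmM]
  have hdmT : d ∉ insert m T := by simp [hdT, hdm]
  rw [e1, e2, hSm, hS]
  rw [star_insert d _ hdmT, star_insert m T hmT, star_insert M T hMT,
    star_insert m _ hmMT, star_insert d T hdT, star_insert M T hMT,
    Finset.prod_insert hmT, Finset.prod_insert hMT]
  ring
end
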